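/- Let A ∈ C^{n×m}, D ∈ C^{m×n}, and suppose rank(D) = 1 with full rank factorization D = d₁ d₂* where d₁ ∈ C^m and d₂ ∈ C^n are nonzero column vectors. Then the inverse of A along D exists if and only if tr(AD) ≠ 0, and in this case the inverse of A along D equals (1/tr(AD)) · D. -/

import Mathlib

open Matrix

lemma DAD_aux (n m : ℕ) (A : Matrix (Fin n) (Fin m) ℂ) (d1 : Fin m → ℂ) (d2 : Fin n → ℂ) :
    vecMulVec d1 (star d2) * A * vecMulVec d1 (star d2) =
      Matrix.trace (A * vecMulVec d1 (star d2)) • vecMulVec d1 (star d2) := by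
  ext i j
  simp only [Matrix.mul_apply, Matrix.trace, Matrix.diag, Matrix.smul_apply,
    vecMulVec_apply, Pi.star_apply, smul_eq_mul, Finset.sum_mul, Finset.mul_sum]
  rw [Finset.sum_comm]
  apply Finset.sum_congr rfl; intro k _
  apply Finset.sum_congr rfl; intro l _
  ring

theorem stmt19 (n m : ℕ) (A : Matrix (Fin n) (Fin m) ℂ) (D : Matrix (Fin m) (Fin n) ℂ)
    (d1 : Fin m → ℂ) (d2 : Fin n → ℂ) (hd1 : d1 ≠ 0) (hd2 : d2 ≠ 0)
    (hD : D = Matrix.vecMulVec d1 (star d2)) :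
    ((∃ X : Matrix (Fin m) (Fin n) ℂ, X * A * D = D ∧ D * A * X = D ∧
        LinearMap.range X.mulVecLin ≤ LinearMap.range D.mulVecLin ∧
        LinearMap.ker D.mulVecLin ≤ LinearMap.ker X.mulVecLin) ↔
      Matrix.trace (A * D) ≠ 0) ∧
    (Matrix.trace (A * D) ≠ 0 →
      ((Matrix.trace (A * D))⁻¹ • D) * A * D = D ∧
      D * A * ((Matrix.trace (A * D))⁻¹ • D) = D ∧
      LinearMap.range ((Matrix.trace (A * D))⁻¹ • D).mulVecLin ≤
        LinearMap.range D.mulVecLin ∧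
      LinearMap.ker D.mulVecLin ≤
        LinearMap.ker ((Matrix.trace (A * D))⁻¹ • D).mulVecLin) := by
  have key : D * A * D = Matrix.trace (A * D) • D := by
    rw [hD]; exact DAD_aux n m A d1 d2
  set t := Matrix.trace (A * D) with ht
  obtain ⟨i0, hi0⟩ := Function.ne_iff.mp hd1
  obtain ⟨j0, hj0⟩ := Function.ne_iff.mp hd2
  have hDne : D i0 j0 ≠ 0 := by
    rw [hD]
    simpa [vecMulVec_apply] using mul_ne_zero hi0 (star_ne_zero.mpr hj0)
  have part2 : t ≠ 0 →
      ((t⁻¹ • D) * A * D = D ∧ D * A * (t⁻¹ • D) = D ∧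
      LinearMap.range ((t⁻¹ • D)).mulVecLin ≤ LinearMap.range D.mulVecLin ∧
      LinearMap.ker D.mulVecLin ≤ LinearMap.ker ((t⁻¹ • D)).mulVecLin) := by
    intro htne
    refine ⟨?_, ?_, ?_, ?_⟩
    · rw [Matrix.smul_mul, Matrix.smul_mul, key, smul_smul, inv_mul_cancel₀ htne, one_smul]
    · rw [Matrix.mul_smul, key, smul_smul, inv_mul_cancel₀ htne, one_smul]
    · rintro x ⟨v, rfl⟩
      exact ⟨t⁻¹ • v, by simp [mulVecLin_apply, smul_mulVec, mulVec_smul]⟩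
    · intro v hv
      rw [LinearMap.mem_ker, mulVecLin_apply] at hv ⊢
      rw [smul_mulVec, hv, smul_zero]
  refine ⟨⟨?_, fun htne => ⟨t⁻¹ • D, part2 htne⟩⟩, part2⟩
  rintro ⟨X, h1, h2, hr, hk⟩ htz
  have hz : D * A * D = 0 := by rw [key, htz, zero_smul]
  obtain ⟨v, hv⟩ := hr (LinearMap.mem_range_self X.mulVecLin (Pi.single j0 1))
  rw [mulVecLin_apply, mulVecLin_apply] at hv
  have hcol : D *ᵥ Pi.single j0 1 = 0 := by
    calc D *ᵥ Pi.single j0 1 = (D * A * X) *ᵥ Pi.single j0 1 := by rw [h2]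
    _ = (D * A) *ᵥ (X *ᵥ Pi.single j0 1) := by rw [← mulVec_mulVec]
    _ = (D * A) *ᵥ (D *ᵥ v) := by rw [hv]
    _ = (D * A * D) *ᵥ v := by rw [mulVec_mulVec]
    _ = 0 := by rw [hz, zero_mulVec]
  have := congrFun hcol i0
  simp only [mulVec_single, mul_one, Pi.zero_apply, MulOpposite.op_one, one_smul, Matrix.col_apply] at this
  exact hDne this
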